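/- Let λ₁ ≤ λ₂ ≤ λ₃ = 0 < λ₄ ≤ λ₅ ≤ λ₆ be real numbers with λ₁+⋯+λ₆ = 6H, H > 0, σ₅(λ) = 0, σ₄(λ) ≥ 0, and ∑_{1≤i<j≤6}(λᵢ−λⱼ)²λᵢλⱼ ≤ 0. Then λ₁ = λ₂ = λ₃ = 0, λ₄ = λ₅ = λ₆ = 2H, and R := (1/15)σ₂(λ) = (4/5)H². -/

import Mathlib

/-- the `r`-th elementary symmetric function -/
def esym {n : ℕ} (x : Fin n → ℝ) (r : ℕ) : ℝ :=
  ∑ t ∈ (Finset.univ : Finset (Fin n)).powersetCard r, ∏ i ∈ t, x i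

set_option maxHeartbeats 1000000 in
lemma aux_zero_of_nonpos (a P : ℝ) (ha : a ≤ 0) (hP : 0 < P) (h : 0 ≤ a * P) : a = 0 := by
  nlinarith

lemma aux_b_zero (a b : ℝ) (hab : a ≤ b) (hb : b ≤ 0) (h : a * b = 0) : b = 0 := by
  nlinarith [mul_self_nonneg b]

theorem stmt_14 (l : Fin 6 → ℝ) (H : ℝ)
    (h01 : l 0 ≤ l 1) (h12 : l 1 ≤ l 2) (h2 : l 2 = 0) (h3 : 0 < l 3)
    (h34 : l 3 ≤ l 4) (h45 : l 4 ≤ l 5)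
    (hH : 0 < H) (hsum : ∑ i, l i = 6 * H)
    (hσ5 : esym l 5 = 0) (hσ4 : 0 ≤ esym l 4)
    (hSimons : ∑ i, ∑ j ∈ Finset.univ.filter (fun j => i < j),
      (l i - l j) ^ 2 * (l i * l j) ≤ 0) :
    l 0 = 0 ∧ l 1 = 0 ∧ l 2 = 0 ∧ l 3 = 2 * H ∧ l 4 = 2 * H ∧ l 5 = 2 * H ∧
    (1 / 15) * esym l 2 = (4 / 5) * H ^ 2 := by
  have h4 : 0 < l 4 := h3.trans_le h34
  have h5 : 0 < l 5 := h4.trans_le h45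
  have e5 : esym l 5 =
      l 1*l 2*l 3*l 4*l 5 + l 0*l 2*l 3*l 4*l 5 + l 0*l 1*l 3*l 4*l 5
      + l 0*l 1*l 2*l 4*l 5 + l 0*l 1*l 2*l 3*l 5 + l 0*l 1*l 2*l 3*l 4 := by
    unfold esym
    rw [show ((Finset.univ : Finset (Fin 6)).powersetCard 5) =
      {{1,2,3,4,5},{0,2,3,4,5},{0,1,3,4,5},{0,1,2,4,5},{0,1,2,3,5},{0,1,2,3,4}} from by decide]
    simp (config := { decide := true }) [Finset.sum_insert, Finset.prod_insert]
    ring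
  have e4 : esym l 4 =
      l 2*l 3*l 4*l 5 + l 1*l 3*l 4*l 5 + l 1*l 2*l 4*l 5 + l 1*l 2*l 3*l 5 + l 1*l 2*l 3*l 4
      + l 0*l 3*l 4*l 5 + l 0*l 2*l 4*l 5 + l 0*l 2*l 3*l 5 + l 0*l 2*l 3*l 4
      + l 0*l 1*l 4*l 5 + l 0*l 1*l 3*l 5 + l 0*l 1*l 3*l 4
      + l 0*l 1*l 2*l 5 + l 0*l 1*l 2*l 4 + l 0*l 1*l 2*l 3 := by
    unfold esym
    rw [show ((Finset.univ : Finset (Fin 6)).powersetCard 4) =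
      {{2,3,4,5},{1,3,4,5},{1,2,4,5},{1,2,3,5},{1,2,3,4},
       {0,3,4,5},{0,2,4,5},{0,2,3,5},{0,2,3,4},
       {0,1,4,5},{0,1,3,5},{0,1,3,4},
       {0,1,2,5},{0,1,2,4},{0,1,2,3}} from by decide]
    simp (config := { decide := true }) [Finset.sum_insert, Finset.prod_insert]
    ring
  have e2 : esym l 2 =
      l 0*l 1 + l 0*l 2 + l 0*l 3 + l 0*l 4 + l 0*l 5
      + l 1*l 2 + l 1*l 3 + l 1*l 4 + l 1*l 5
      + l 2*l 3 + l 2*l 4 + l 2*l 5 + l 3*l 4 + l 3*l 5 + l 4*l 5 := by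
    unfold esym
    rw [show ((Finset.univ : Finset (Fin 6)).powersetCard 2) =
      {{0,1},{0,2},{0,3},{0,4},{0,5},{1,2},{1,3},{1,4},{1,5},
       {2,3},{2,4},{2,5},{3,4},{3,5},{4,5}} from by decide]
    simp (config := { decide := true }) [Finset.sum_insert, Finset.prod_insert]
    ring
  rw [Fin.sum_univ_six] at hsum
  simp (config := { decide := true }) only [Fin.sum_univ_six, Finset.sum_filter,
    if_true, if_false] at hSimons
  rw [e5, h2] at hσ5
  rw [e4, h2] at hσ4
  -- l 1 = 0
  have p5 : l 0 * l 1 * (l 3 * l 4 * l 5) = 0 := by linarith [hσ5]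
  have hpos : 0 < l 3 * l 4 * l 5 := by positivity
  have hab : l 0 * l 1 = 0 := by
    rcases mul_eq_zero.1 p5 with h | h
    · exact h
    · exact absurd h hpos.ne'
  have h1le : l 1 ≤ 0 := h12.trans_eq h2
  have hb : l 1 = 0 := aux_b_zero _ _ h01 h1le hab
  -- l 0 = 0
  have h0le : l 0 ≤ 0 := h01.trans h1le
  rw [hb] at hσ4
  have p4 : 0 ≤ l 0 * (l 3 * l 4 * l 5) := by linarith [hσ4]
  have ha : l 0 = 0 := aux_zero_of_nonpos _ _ h0le hpos p4
  -- Simons forces l 3 = l 4 = l 5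
  rw [ha, hb, h2] at hSimons
  have n1 : 0 ≤ (l 3 - l 4) ^ 2 * (l 3 * l 4) := by positivity
  have n2 : 0 ≤ (l 3 - l 5) ^ 2 * (l 3 * l 5) := by positivity
  have n3 : 0 ≤ (l 4 - l 5) ^ 2 * (l 4 * l 5) := by positivity
  have hS : (l 3 - l 4) ^ 2 * (l 3 * l 4) + (l 3 - l 5) ^ 2 * (l 3 * l 5)
      + (l 4 - l 5) ^ 2 * (l 4 * l 5) ≤ 0 := by linarith [hSimons]
  have t1 : (l 3 - l 4) ^ 2 * (l 3 * l 4) = 0 := by linarith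
  have t3 : (l 4 - l 5) ^ 2 * (l 4 * l 5) = 0 := by linarith
  have h34' : l 3 = l 4 := by
    have := mul_eq_zero.1 t1
    rcases this with h | h
    · have := pow_eq_zero_iff (n := 2) (by norm_num) |>.1 h
      linarith [sub_eq_zero.1 this]
    · exact absurd h (by positivity)
  have h45' : l 4 = l 5 := by
    have := mul_eq_zero.1 t3
    rcases this with h | h
    · have := pow_eq_zero_iff (n := 2) (by norm_num) |>.1 h
      linarith [sub_eq_zero.1 this]
    · exact absurd h (by positivity)
  have hc : l 3 = 2 * H := by
    rw [ha, hb, h2] at hsum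
    linarith [h34', h45']
  have hd : l 4 = 2 * H := by linarith
  have he : l 5 = 2 * H := by linarith
  refine ⟨ha, hb, h2, hc, hd, he, ?_⟩
  rw [e2, ha, hb, h2, hc, hd, he]
  ring
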